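/- Let X ∈ V_2 and let s ≥ 0 and p ≥ 0 be integers with p̃ < I and κ_{p̃} + s < κ_{p̃ + 1}. If ad(Ω_+)^{κ_{p̃} + s}(X) = 0, then ad(Ω_+)^{κ_{p̃}}(X) = 0. -/

import Mathlib

noncomputable section

/-- Iterated adjoint action: `ad(Y)^l X`. -/
def adPow {𝔤 : Type*} [LieRing 𝔤] [LieAlgebra ℂ 𝔤] (Y : 𝔤) (l : ℕ) (X : 𝔤) : 𝔤 :=
  ((LieAlgebra.ad ℂ 𝔤 Y) ^ l) X

/-- The descendants `ξ_l = (1/l!) ad(Ω₋)^l ξ` of a highest weight vector `ξ`. -/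
def xiVec {𝔤 : Type*} [LieRing 𝔤] [LieAlgebra ℂ 𝔤] (Ωm : 𝔤) (ξ : 𝔤) (l : ℕ) : 𝔤 :=
  ((l.factorial : ℂ))⁻¹ • adPow Ωm l ξ

/-- The eigenspace `V_n` of `ad(W₀)` with eigenvalue `n`. -/
def Vspace {𝔤 : Type*} [LieRing 𝔤] [LieAlgebra ℂ 𝔤] (W₀ : 𝔤) (n : ℤ) : Submodule ℂ 𝔤 :=
  Module.End.eigenspace (LieAlgebra.ad ℂ 𝔤 W₀) (n : ℂ)

/-- The vector `X^{(j)} = ξ^j_{k_j−1}` (multiplied by `i` when `k_j` is even). -/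
def Xv {𝔤 : Type*} [LieRing 𝔤] [LieAlgebra ℂ 𝔤] (Ωm : 𝔤) {N : ℕ}
    (k : Fin N → ℕ) (ξ : Fin N → 𝔤) (j : Fin N) : 𝔤 :=
  if Odd (k j) then xiVec Ωm (ξ j) (k j - 1) else Complex.I • xiVec Ωm (ξ j) (k j - 1)

/-- The vector `Y^{(j)} = i X^{(j)}`. -/
def Yv {𝔤 : Type*} [LieRing 𝔤] [LieAlgebra ℂ 𝔤] (Ωm : 𝔤) {N : ℕ}
    (k : Fin N → ℕ) (ξ : Fin N → 𝔤) (j : Fin N) : 𝔤 :=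
  Complex.I • Xv Ωm k ξ j

/-- `E^l_+` : the real span of the vectors `X^{(j)}` with `k_j = κ_l`. -/
def Eplus {𝔤 : Type*} [LieRing 𝔤] [LieAlgebra ℂ 𝔤] (Ωm : 𝔤) {N I : ℕ}
    (k : Fin N → ℕ) (ξ : Fin N → 𝔤) (κ : Fin I → ℕ) (l : Fin I) : Submodule ℝ 𝔤 :=
  Submodule.span ℝ (Xv Ωm k ξ '' {j | k j = κ l})

/-- `E^l_0` : the real span of the vectors `Y^{(j)}` with `k_j = κ_l`. -/
def Ezero {𝔤 : Type*} [LieRing 𝔤] [LieAlgebra ℂ 𝔤] (Ωm : 𝔤) {N I : ℕ}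
    (k : Fin N → ℕ) (ξ : Fin N → 𝔤) (κ : Fin I → ℕ) (l : Fin I) : Submodule ℝ 𝔤 :=
  Submodule.span ℝ (Yv Ωm k ξ '' {j | k j = κ l})

/-- The (direct) sum `⊕_{q=1}^{l} (E^q_0 ⊕ E^q_+)`. -/
def Dsum {𝔤 : Type*} [LieRing 𝔤] [LieAlgebra ℂ 𝔤] (Ωm : 𝔤) {N I : ℕ}
    (k : Fin N → ℕ) (ξ : Fin N → 𝔤) (κ : Fin I → ℕ) (l : Fin I) : Submodule ℝ 𝔤 :=
  ⨆ q : Fin I, ⨆ _ : q ≤ l, (Ezero Ωm k ξ κ q ⊔ Eplus Ωm k ξ κ q)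

section Aux

variable {𝔤 : Type*} [LieRing 𝔤] [LieAlgebra ℂ 𝔤]

lemma adPow_zero (Y X : 𝔤) : adPow Y 0 X = X := rfl

lemma adPow_one (Y X : 𝔤) : adPow Y 1 X = ⁅Y, X⁆ := by
  simp [adPow, LieAlgebra.ad_apply]

lemma adPow_succ_left (Y : 𝔤) (m : ℕ) (X : 𝔤) :
    adPow Y (m + 1) X = ⁅Y, adPow Y m X⁆ := by
  simp [adPow, pow_succ', Module.End.mul_apply, LieAlgebra.ad_apply]

lemma adPow_succ_right (Y : 𝔤) (m : ℕ) (X : 𝔤) :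
    adPow Y (m + 1) X = adPow Y m ⁅Y, X⁆ := by
  simp [adPow, pow_succ, Module.End.mul_apply, LieAlgebra.ad_apply]

lemma adPow_add (Y : 𝔤) (a b : ℕ) (X : 𝔤) :
    adPow Y (a + b) X = adPow Y a (adPow Y b X) := by
  simp [adPow, pow_add, Module.End.mul_apply]

lemma adPow_smul (Y : 𝔤) (m : ℕ) (z : ℂ) (X : 𝔤) :
    adPow Y m (z • X) = z • adPow Y m X := map_smul _ _ _

lemma adPow_zero_vec (Y : 𝔤) (m : ℕ) : adPow Y m (0 : 𝔤) = 0 := map_zero _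

variable (W₀ Ωp Ωm : 𝔤)

/-- Weight of the descendant `ad(Ωm)^l ξ`. -/
lemma aux_weight (hW0m : ⁅W₀, Ωm⁆ = (-2 : ℂ) • Ωm) (k : ℕ) (ξ : 𝔤)
    (hW : ⁅W₀, ξ⁆ = ((2 * k : ℕ) : ℂ) • ξ) (l : ℕ) :
    ⁅W₀, adPow Ωm l ξ⁆ = (((2 * k : ℕ) : ℂ) - 2 * l) • adPow Ωm l ξ := by
  induction l with
  | zero => simpa [adPow_zero] using hW
  | succ l ih =>
    rw [adPow_succ_left, leibniz_lie, hW0m, ih, smul_lie, lie_smul, ← adPow_succ_left,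
      ← add_smul]
    congr 1
    push_cast
    ring

/-- The sl₂ raising relation on descendants. -/
lemma aux_string (hW0m : ⁅W₀, Ωm⁆ = (-2 : ℂ) • Ωm) (hpm : ⁅Ωp, Ωm⁆ = W₀)
    (k : ℕ) (ξ : 𝔤) (hW : ⁅W₀, ξ⁆ = ((2 * k : ℕ) : ℂ) • ξ) (hp : ⁅Ωp, ξ⁆ = 0) (l : ℕ) :
    ⁅Ωp, adPow Ωm (l + 1) ξ⁆
      = (((l : ℂ) + 1) * (((2 * k : ℕ) : ℂ) - l)) • adPow Ωm l ξ := by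
  induction l with
  | zero =>
    rw [adPow_succ_left, leibniz_lie, hpm, adPow_zero, hW, hp, lie_zero, add_zero]
    push_cast; ring_nf
  | succ l ih =>
    rw [adPow_succ_left Ωm (l+1), leibniz_lie, hpm,
      aux_weight W₀ Ωm hW0m k ξ hW, ih, lie_smul, ← adPow_succ_left, ← add_smul]
    congr 1
    push_cast
    ring

/-- The sl₂ raising relation on the normalized `ξ_l`. -/
lemma aux_xi_string (hW0m : ⁅W₀, Ωm⁆ = (-2 : ℂ) • Ωm) (hpm : ⁅Ωp, Ωm⁆ = W₀)
    (k : ℕ) (ξ : 𝔤) (hW : ⁅W₀, ξ⁆ = ((2 * k : ℕ) : ℂ) • ξ) (hp : ⁅Ωp, ξ⁆ = 0) (l : ℕ) :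
    ⁅Ωp, xiVec Ωm ξ (l + 1)⁆ = ((((2 * k : ℕ) : ℂ)) - l) • xiVec Ωm ξ l := by
  unfold xiVec
  rw [lie_smul, aux_string W₀ Ωp Ωm hW0m hpm k ξ hW hp l, smul_smul, smul_smul]
  congr 1
  have h1 : ((l + 1).factorial : ℂ) = ((l : ℂ) + 1) * (l.factorial : ℂ) := by
    push_cast [Nat.factorial_succ]; ring
  have h2 : ((l.factorial : ℂ)) ≠ 0 := by
    exact_mod_cast Nat.cast_ne_zero.mpr (Nat.factorial_ne_zero l)
  have h3 : ((l : ℂ) + 1) ≠ 0 := Nat.cast_add_one_ne_zero l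
  rw [h1]
  field_simp

/-- Raising `m` times from level `d + m` gives a nonzero multiple of level `d`. -/
lemma aux_descent (hW0m : ⁅W₀, Ωm⁆ = (-2 : ℂ) • Ωm) (hpm : ⁅Ωp, Ωm⁆ = W₀)
    (k : ℕ) (ξ : 𝔤) (hW : ⁅W₀, ξ⁆ = ((2 * k : ℕ) : ℂ) • ξ) (hp : ⁅Ωp, ξ⁆ = 0)
    (m d : ℕ) (h : d + m ≤ 2 * k) :
    ∃ C : ℂ, C ≠ 0 ∧ adPow Ωp m (xiVec Ωm ξ (d + m)) = C • xiVec Ωm ξ d := by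
  induction m with
  | zero => exact ⟨1, one_ne_zero, by simp [adPow_zero]⟩
  | succ m ih =>
    obtain ⟨C, hC, hC2⟩ := ih (by omega)
    refine ⟨(((2 * k : ℕ) : ℂ) - (d + m)) * C, ?_, ?_⟩
    · refine mul_ne_zero ?_ hC
      have : (d + m : ℕ) ≠ 2 * k := by omega
      intro hcontra
      apply this
      have : ((d + m : ℕ) : ℂ) = ((2 * k : ℕ) : ℂ) := by push_cast; push_cast at hcontra; linear_combination -hcontra
      exact_mod_cast this
    · have hstep : (d + (m + 1)) = (d + m) + 1 := by ring
      rw [hstep, adPow_succ_right,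
        aux_xi_string W₀ Ωp Ωm hW0m hpm k ξ hW hp (d + m)]
      rw [adPow_smul, hC2, smul_smul]
      congr 1
      push_cast
      ring

lemma aux_xiVec_zero_eq (ξ : 𝔤) : xiVec Ωm ξ 0 = ξ := by
  simp [xiVec, adPow_zero, Nat.factorial]

/-- Vanishing: applying `ad(Ωp)` at least `k` times to `ξ_{k-1}` gives zero. -/
lemma aux_vanish (hW0m : ⁅W₀, Ωm⁆ = (-2 : ℂ) • Ωm) (hpm : ⁅Ωp, Ωm⁆ = W₀)
    (k : ℕ) (ξ : 𝔤) (hW : ⁅W₀, ξ⁆ = ((2 * k : ℕ) : ℂ) • ξ) (hp : ⁅Ωp, ξ⁆ = 0)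
    (hk : 1 ≤ k) (m : ℕ) (hm : k ≤ m) :
    adPow Ωp m (xiVec Ωm ξ (k - 1)) = 0 := by
  have hbase : adPow Ωp k (xiVec Ωm ξ (k - 1)) = 0 := by
    obtain ⟨C, _, hC2⟩ := aux_descent W₀ Ωp Ωm hW0m hpm k ξ hW hp (k - 1) 0 (by omega)
    have h2 : (0 : ℕ) + (k - 1) = k - 1 := by omega
    rw [h2] at hC2
    have hh : adPow Ωp (1 + (k - 1)) (xiVec Ωm ξ (k - 1)) = 0 := by
      rw [adPow_add, hC2, adPow_smul, adPow_one, aux_xiVec_zero_eq, hp, smul_zero]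
    have h1 : 1 + (k - 1) = k := by omega
    rwa [h1] at hh
  have h3 : m = (m - k) + k := by omega
  rw [h3, adPow_add, hbase, adPow_zero_vec]

/-- Nonvanishing of intermediate descendants. -/
lemma aux_ne_zero (k : ℕ) (ξ : 𝔤) (hne : xiVec Ωm ξ (k - 1) ≠ 0)
    (l : ℕ) (hl : l ≤ k - 1) : xiVec Ωm ξ l ≠ 0 := by
  intro h0
  apply hne
  have hv : adPow Ωm l ξ = 0 := by
    have := congrArg (fun v => (l.factorial : ℂ) • v) h0
    simpa [xiVec, smul_smul, mul_inv_cancel₀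
      (a := (l.factorial : ℂ)) (Nat.cast_ne_zero.mpr (Nat.factorial_ne_zero l)),
      smul_zero] using this
  have : adPow Ωm (k - 1) ξ = 0 := by
    have h1 : k - 1 = (k - 1 - l) + l := by omega
    rw [h1, adPow_add, hv, adPow_zero_vec]
  simp [xiVec, this]

end Aux


/-- Lemma 6: if X ∈ V₂, κ_{p̃} + s < κ_{p̃+1} and ad(Ω₊)^{κ_{p̃}+s}(X) = 0,
then ad(Ω₊)^{κ_{p̃}}(X) = 0. -/
theorem adPow_eq_zero_of_adPow_add_eq_zero
    (𝔤 : Type*) [LieRing 𝔤] [LieAlgebra ℂ 𝔤] [FiniteDimensional ℂ 𝔤]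
    [LieAlgebra.IsSemisimple ℂ 𝔤]
    (c : 𝔤 → 𝔤)
    (hc_add : ∀ X Y : 𝔤, c (X + Y) = c X + c Y)
    (hc_smul : ∀ (z : ℂ) (X : 𝔤), c (z • X) = (starRingEnd ℂ z) • c X)
    (hc_lie : ∀ X Y : 𝔤, c ⁅X, Y⁆ = ⁅c X, c Y⁆)
    (hc_invol : ∀ X : 𝔤, c (c X) = X)
    (B : 𝔤 →ₗ[ℂ] 𝔤 →ₗ[ℂ] ℂ)
    (hB_symm : ∀ X Y : 𝔤, B X Y = B Y X)
    (hB_inv : ∀ X Y Z : 𝔤, B ⁅X, Y⁆ Z = B X ⁅Y, Z⁆)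
    (hB_pos : ∀ X : 𝔤, X ≠ 0 → 0 < (-(B (c X) X)).re ∧ (B (c X) X).im = 0)
    (W₀ Ωp Ωm : 𝔤)
    (hW0p : ⁅W₀, Ωp⁆ = (2 : ℂ) • Ωp)
    (hW0m : ⁅W₀, Ωm⁆ = (-2 : ℂ) • Ωm)
    (hpm : ⁅Ωp, Ωm⁆ = W₀)
    (hcΩ : c Ωp = -Ωm)
    (N : ℕ) (k : Fin (N + 1) → ℕ) (ξ : Fin (N + 1) → 𝔤)
    (hk0 : k 0 = 1) (hkmono : Monotone k)
    (hhw : ∀ j, ⁅Ωp, ξ j⁆ = 0 ∧ ⁅W₀, ξ j⁆ = ((2 * k j : ℕ) : ℂ) • ξ j)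
    (hindep : iSupIndep fun j => Submodule.span ℂ (Set.range fun l => xiVec Ωm (ξ j) l))
    (hconj : ∀ j, ∀ l ≤ 2 * k j,
      c (xiVec Ωm (ξ j) l) = ((-1 : ℂ)) ^ l • xiVec Ωm (ξ j) (2 * k j - l))
    (hbasisli : LinearIndependent ℂ fun j => xiVec Ωm (ξ j) (k j - 1))
    (hbasissp : Submodule.span ℂ (Set.range fun j => xiVec Ωm (ξ j) (k j - 1)) = Vspace W₀ 2)
    (I : ℕ) (κ : Fin (I + 1) → ℕ) (hκ : StrictMono κ)
    (hkκ : ∀ j, ∃ l, k j = κ l) (hκk : ∀ l, ∃ j, k j = κ l)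
    (tilde : ℕ → Fin (I + 1))
    (htilde0 : tilde 0 = 0)
    (htilde : ∀ s : ℕ, 0 < s → κ (tilde s) ≤ s ∧ ∀ l : Fin (I + 1), κ l ≤ s → l ≤ tilde s)
    (X : 𝔤) (hX : X ∈ Vspace W₀ 2)
    (s p : ℕ)
    (hsucc : (tilde p : ℕ) + 1 < I + 1)
    (hgap : κ (tilde p) + s < κ ⟨(tilde p : ℕ) + 1, hsucc⟩)
    (h0 : adPow Ωp (κ (tilde p) + s) X = 0) :
    adPow Ωp (κ (tilde p)) X = 0 := by
  -- basic facts
  have hk1 : ∀ j, 1 ≤ k j := fun j => hk0 ▸ hkmono (Fin.zero_le j)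
  have hw : ∀ j, ⁅Ωp, ξ j⁆ = 0 := fun j => (hhw j).1
  have hWj : ∀ j, ⁅W₀, ξ j⁆ = ((2 * k j : ℕ) : ℂ) • ξ j := fun j => (hhw j).2
  set m1 := κ (tilde p) + s with hm1
  set m2 := κ (tilde p) with hm2
  -- decompose X
  rw [← hbasissp] at hX
  obtain ⟨co, hco⟩ := (Submodule.mem_span_range_iff_exists_fun ℂ).mp hX
  have key : ∀ m : ℕ, adPow Ωp m X
      = ∑ j, co j • adPow Ωp m (xiVec Ωm (ξ j) (k j - 1)) := by
    intro m
    rw [← hco]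
    show ((LieAlgebra.ad ℂ 𝔤 Ωp) ^ m) _ = _
    rw [map_sum]
    simp [adPow, map_smul]
  -- the vectors u j at level k j - 1 - m1 are linearly independent
  set u : Fin (N + 1) → 𝔤 := fun j => xiVec Ωm (ξ j) (k j - 1 - m1) with hu
  have humem : ∀ j, u j ∈ Submodule.span ℂ (Set.range fun l => xiVec Ωm (ξ j) l) :=
    fun j => Submodule.subset_span ⟨k j - 1 - m1, rfl⟩
  have hune : ∀ j, u j ≠ 0 := fun j =>
    aux_ne_zero Ωm (k j) (ξ j) (hbasisli.ne_zero j) _ (by omega)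
  have hli : LinearIndependent ℂ u :=
    iSupIndep.linearIndependent _ hindep humem hune
  -- each summand of adPow Ωp m1 X is a multiple of u j
  have hterm : ∀ j, ∃ g : ℂ,
      co j • adPow Ωp m1 (xiVec Ωm (ξ j) (k j - 1)) = g • u j
      ∧ (m1 < k j → g = 0 → co j = 0) := by
    intro j
    by_cases h : k j ≤ m1
    · refine ⟨0, ?_, fun h1 _ => absurd h (by omega)⟩
      rw [aux_vanish W₀ Ωp Ωm hW0m hpm (k j) (ξ j) (hWj j) (hw j) (hk1 j) m1 h]
      simp
    · push_neg at h
      obtain ⟨C, hC, hC2⟩ := aux_descent W₀ Ωp Ωm hW0m hpm (k j) (ξ j) (hWj j) (hw j)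
        m1 (k j - 1 - m1) (by omega)
      have hd : k j - 1 - m1 + m1 = k j - 1 := by omega
      rw [hd] at hC2
      refine ⟨co j * C, ?_, fun _ hg => ?_⟩
      · rw [hC2, smul_smul]
      · rcases mul_eq_zero.mp hg with h' | h'
        · exact h'
        · exact absurd h' hC
  choose g hg1 hg2 using hterm
  -- from h0, all the g j vanish
  have hgsum : ∑ j, g j • u j = 0 := by
    rw [← h0, key m1]
    exact (Finset.sum_congr rfl fun j _ => (hg1 j).symm)
  have hg0 : ∀ j, g j = 0 := by
    have := Fintype.linearIndependent_iff.mp hli g hgsum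
    exact this
  have hco0 : ∀ j, m1 < k j → co j = 0 := fun j hj => hg2 j hj (hg0 j)
  -- conclude for m2
  rw [key m2]
  refine Finset.sum_eq_zero fun j _ => ?_
  by_cases h : k j ≤ m2
  · rw [aux_vanish W₀ Ωp Ωm hW0m hpm (k j) (ξ j) (hWj j) (hw j) (hk1 j) m2 h]
    simp
  · push_neg at h
    have hbig : m1 < k j := by
      obtain ⟨l, hl⟩ := hkκ j
      have hlt : tilde p < l := (hκ.lt_iff_lt).mp (by omega)
      have hle : κ ⟨(tilde p : ℕ) + 1, hsucc⟩ ≤ κ l :=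
        hκ.monotone (Fin.le_def.mpr (by simpa using hlt))
      omega
    rw [hco0 j hbig, zero_smul]
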